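/- With I the ideal generated by the t-coefficients of the series Q_{s,r,w} and I' the ideal generated by the t-coefficients of the series Q'_{s,r,w} = (d^w x_s(t)/dt^w) · x_r(t) (same index ranges), for all integers n, k ≥ 0 and m ∈ ℤ one has dim (S/I')_{n,k,m} ≥ dim (S/I)_{n,k,m}, where (·)_{n,k,m} denotes the graded component of total x-degree n, q-degree k and weight m. -/

import Mathlib

set_option synthInstance.maxHeartbeats 1000000
set_option maxHeartbeats 1000000


open scoped BigOperators

/-- The homogeneous coordinate ring: polynomial ring in the variables `x_j^{(i)}`. -/
abbrev ArcRing (l : ℕ) := MvPolynomial (Fin (l + 1) × ℕ) ℂ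

/-- The series `x_j(t) = Σ_{i ≥ 0} x_j^{(i)} t^i`. -/
noncomputable def xSeries (l : ℕ) (j : Fin (l + 1)) : PowerSeries (ArcRing l) :=
  PowerSeries.mk fun i => MvPolynomial.X (j, i)

/-- The formal derivative `d/dt` of a formal power series. -/
noncomputable def tDeriv {R : Type*} [CommRing R] (f : PowerSeries R) : PowerSeries R :=
  PowerSeries.mk fun n => ((n + 1 : ℕ) : R) * PowerSeries.coeff (n + 1) f

/-- The series `Q_{s,r,w} = Σ_{u=s}^{r-1} (-1)^u C(r-s-1, u-s) (d^w x_u(t)/dt^w) x_{r+s-u}(t)`. -/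
noncomputable def Qseries (l s r w : ℕ) (hr : r ≤ l) : PowerSeries (ArcRing l) :=
  ∑ u ∈ Finset.Icc s (r - 1),
    if h : s ≤ u ∧ u < r then
      ((-1 : ℂ) ^ u * ((r - s - 1).choose (u - s) : ℂ)) •
        (tDeriv^[w] (xSeries l ⟨u, by omega⟩) * xSeries l ⟨r + s - u, by omega⟩)
    else 0

/-- The series `Q'_{s,r,w} = (d^w x_s(t)/dt^w) · x_r(t)`. -/
noncomputable def Q'series (l s r w : ℕ) (hs : s ≤ l) (hr : r ≤ l) :
    PowerSeries (ArcRing l) :=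
  tDeriv^[w] (xSeries l ⟨s, by omega⟩) * xSeries l ⟨r, by omega⟩

/-- The ideal `I` generated by all the `t`-coefficients of the series `Q_{s,r,w}`. -/
noncomputable def QIdeal (l : ℕ) : Ideal (ArcRing l) :=
  Ideal.span {p | ∃ (s r w m : ℕ) (hr : r ≤ l), s + 2 ≤ r ∧ w + s + 2 ≤ r ∧
    p = PowerSeries.coeff m (Qseries l s r w hr)}

/-- The ideal `I'` generated by all the `t`-coefficients of the series `Q'_{s,r,w}`. -/
noncomputable def Q'Ideal (l : ℕ) : Ideal (ArcRing l) :=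
  Ideal.span {p | ∃ (s r w m : ℕ) (hs : s ≤ l) (hr : r ≤ l), s + 2 ≤ r ∧ w + s + 2 ≤ r ∧
    p = PowerSeries.coeff m (Q'series l s r w hs hr)}

/-- The tri-grading on the variables: `deg₁ x_j^{(i)} = 1` (total `x`-degree),
`deg₂ x_j^{(i)} = i` (`q`-degree), `deg₃ x_j^{(i)} = 2j - l` (`sl₂`-weight). -/
def triWeight (l : ℕ) : Fin (l + 1) × ℕ → ℕ × ℕ × ℤ :=
  fun p => (1, p.2, 2 * (p.1 : ℤ) - (l : ℤ))

/-- The graded component of `S ⧸ K` of tri-degree `d`: the image in the quotient of the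
span of the monomials of tri-degree `d`. -/
noncomputable def triPiece (l : ℕ) (K : Ideal (ArcRing l)) (d : ℕ × ℕ × ℤ) :
    Submodule ℂ (ArcRing l ⧸ K) :=
  (MvPolynomial.weightedHomogeneousSubmodule ℂ (triWeight l) d).map
    (Ideal.Quotient.mkₐ ℂ K).toLinearMap

namespace ArcAux
open MvPolynomial Finsupp Finset

def DD (w a : ℕ) : ℕ := ∏ i ∈ Finset.range w, (a + i + 1)

lemma coeff_tDeriv_iter {R : Type*} [CommRing R] (w : ℕ) (f : PowerSeries R) (a : ℕ) :
    PowerSeries.coeff a (tDeriv^[w] f) = (DD w a : R) * PowerSeries.coeff (a + w) f := by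
  induction w generalizing f with
  | zero => simp [DD]
  | succ w ih =>
    rw [Function.iterate_succ_apply, ih (tDeriv f)]
    have : PowerSeries.coeff (a + w) (tDeriv f)
        = ((a + w + 1 : ℕ) : R) * PowerSeries.coeff (a + w + 1) f := by
      simp [tDeriv]
    rw [this, show a + (w+1) = a + w + 1 by omega, show DD (w+1) a = DD w a * (a+w+1) from Finset.prod_range_succ _ _]
    push_cast
    ring

noncomputable def PT (l : ℕ) (u v : Fin (l + 1)) (w m : ℕ) : ArcRing l :=
  ∑ p ∈ Finset.HasAntidiagonal.antidiagonal m,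
    ((DD w p.1 : ℂ)) • (X (u, p.1 + w) * X (v, p.2))

lemma coeff_xSeries (l : ℕ) (j : Fin (l+1)) (a : ℕ) :
    PowerSeries.coeff a (xSeries l j) = X (j, a) := by
  simp [xSeries]

lemma coeff_prod (l : ℕ) (u v : Fin (l + 1)) (w m : ℕ) :
    PowerSeries.coeff m (tDeriv^[w] (xSeries l u) * xSeries l v) = PT l u v w m := by
  rw [PowerSeries.coeff_mul, PT]
  refine Finset.sum_congr rfl fun p hp => ?_
  rw [coeff_tDeriv_iter, coeff_xSeries, coeff_xSeries, smul_eq_C_mul, mul_assoc]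
  congr 1

lemma coeff_Q' (l s r w m : ℕ) (hs : s ≤ l) (hr : r ≤ l) :
    PowerSeries.coeff m (Q'series l s r w hs hr)
      = PT l ⟨s, by omega⟩ ⟨r, by omega⟩ w m := by
  rw [Q'series, coeff_prod]

lemma coeff_Q (l s r w m : ℕ) (hr : r ≤ l) (h2 : s + 2 ≤ r) :
    PowerSeries.coeff m (Qseries l s r w hr)
      = ((-1 : ℂ) ^ s) • PT l ⟨s, by omega⟩ ⟨r, by omega⟩ w m +
        ∑ u ∈ Finset.Icc (s+1) (r-1),
          if h : s ≤ u ∧ u < r then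
            ((-1 : ℂ) ^ u * ((r - s - 1).choose (u - s) : ℂ)) •
              PT l ⟨u, by omega⟩ ⟨r + s - u, by omega⟩ w m
          else 0 := by
  rw [Qseries, map_sum]
  rw [show Finset.Icc s (r-1) = insert s (Finset.Icc (s+1) (r-1)) by
    ext u; simp only [Finset.mem_Icc, Finset.mem_insert]; omega]
  rw [Finset.sum_insert (by simp only [Finset.mem_Icc]; omega)]
  congr 1
  · rw [dif_pos ⟨le_refl s, by omega⟩, PowerSeries.coeff_smul, coeff_prod]
    simp [Nat.choose_zero_right]
  · refine Finset.sum_congr rfl fun u hu => ?_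
    simp only [Finset.mem_Icc] at hu
    rw [dif_pos (by omega : s ≤ u ∧ u < r), dif_pos (by omega : s ≤ u ∧ u < r),
      PowerSeries.coeff_smul, coeff_prod]

def rhoW (l : ℕ) : Fin (l + 1) × ℕ → ℕ := fun v => (v.1 : ℕ) * (v.1 : ℕ)

lemma PT_tri (l : ℕ) (u v : Fin (l + 1)) (w m : ℕ) :
    IsWeightedHomogeneous (triWeight l) (PT l u v w m)
      ((2 : ℕ), m + w, 2 * (u.val : ℤ) + 2 * (v.val : ℤ) - 2 * l) := by
  rw [← mem_weightedHomogeneousSubmodule]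
  refine Submodule.sum_mem _ fun p hp => Submodule.smul_mem _ _ ?_
  rw [mem_weightedHomogeneousSubmodule]
  have h := (isWeightedHomogeneous_X ℂ (triWeight l) (u, p.1 + w)).mul
    (isWeightedHomogeneous_X ℂ (triWeight l) (v, p.2))
  have e : triWeight l (u, p.1 + w) + triWeight l (v, p.2)
      = ((2 : ℕ), m + w, 2 * (u.val : ℤ) + 2 * (v.val : ℤ) - 2 * l) := by
    have hm := Finset.HasAntidiagonal.mem_antidiagonal.mp hp
    simp only [triWeight, Prod.mk_add_mk, Prod.mk.injEq]
    exact ⟨trivial, by omega, by push_cast; ring⟩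
  rwa [e] at h

lemma PT_rho (l : ℕ) (u v : Fin (l + 1)) (w m : ℕ) :
    IsWeightedHomogeneous (rhoW l) (PT l u v w m) (u.val * u.val + v.val * v.val) := by
  rw [← mem_weightedHomogeneousSubmodule]
  refine Submodule.sum_mem _ fun p hp => Submodule.smul_mem _ _ ?_
  rw [mem_weightedHomogeneousSubmodule]
  exact (isWeightedHomogeneous_X ℂ (rhoW l) (u, p.1 + w)).mul
    (isWeightedHomogeneous_X ℂ (rhoW l) (v, p.2))

/-- polynomials all of whose monomials have `rhoW`-weight `< ω`. -/
noncomputable def PBelow (l : ℕ) (ω : ℕ) : Submodule ℂ (ArcRing l) where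
  carrier := {p | ∀ μ ∈ p.support, weight (rhoW l) μ < ω}
  zero_mem' := by intro μ hμ; simp at hμ
  add_mem' := by
    intro a b ha hb μ hμ
    rcases Finset.mem_union.mp (MvPolynomial.support_add hμ) with h | h
    · exact ha μ h
    · exact hb μ h
  smul_mem' := by
    intro c p hp μ hμ
    exact hp μ (MvPolynomial.support_smul hμ)

lemma mem_PBelow {l ω : ℕ} {p : ArcRing l} :
    p ∈ PBelow l ω ↔ ∀ μ ∈ p.support, weight (rhoW l) μ < ω := Iff.rfl

lemma isWH_mem_PBelow {l : ℕ} {p : ArcRing l} {W ω : ℕ}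
    (h : IsWeightedHomogeneous (rhoW l) p W) (hW : W < ω) : p ∈ PBelow l ω := by
  intro μ hμ
  rw [h (MvPolynomial.mem_support_iff.mp hμ)]
  exact hW

lemma PBelow_mono {l : ℕ} {ω ω' : ℕ} (h : ω ≤ ω') : PBelow l ω ≤ PBelow l ω' :=
  fun p hp μ hμ => lt_of_lt_of_le (hp μ hμ) h

lemma monomial_mul_PBelow {l : ℕ} (μ : (Fin (l+1) × ℕ) →₀ ℕ) (c : ℂ) {p : ArcRing l} {ω : ℕ}
    (hp : p ∈ PBelow l ω) :
    monomial μ c * p ∈ PBelow l (weight (rhoW l) μ + ω) := by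
  intro ν hν
  have h := MvPolynomial.support_mul _ _ hν
  rw [Finset.mem_add] at h
  obtain ⟨a, ha, b, hb, rfl⟩ := h
  have ha' : a = μ := by
    have := MvPolynomial.support_monomial (s := μ) (a := c) ▸ ha
    by_cases hc : c = 0
    · simp [hc] at this
    · simpa [hc] using this
  subst ha'
  rw [map_add]
  exact Nat.add_lt_add_left (hp b hb) _

lemma component_PBelow {l : ℕ} {p : ArcRing l} {ω ω' : ℕ}
    (hp : p ∈ PBelow l ω) (h : ω ≤ ω') :
    weightedHomogeneousComponent (rhoW l) ω' p = 0 := by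
  ext ν
  rw [coeff_weightedHomogeneousComponent, MvPolynomial.coeff_zero]
  split_ifs with h1
  · by_contra hc
    have := hp ν (MvPolynomial.mem_support_iff.mpr hc)
    omega
  · rfl

section Main

variable (l n k : ℕ) (mm : ℤ)

noncomputable def SDm : Submodule ℂ (ArcRing l) :=
  weightedHomogeneousSubmodule ℂ (triWeight l) (n, k, mm)

noncomputable def Fsub (ω : ℕ) : Submodule ℂ (ArcRing l) :=
  Submodule.restrictScalars ℂ (QIdeal l) ⊓ SDm l n k mm ⊓ PBelow l (ω + 1)

noncomputable def Gsub (ω : ℕ) : Submodule ℂ (ArcRing l) :=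
  Submodule.map (weightedHomogeneousComponent (rhoW l) ω) (Fsub l n k mm ω)

noncomputable def NF (t : ℕ) : Submodule ℂ (ArcRing l) :=
  (Finset.range (t + 1)).sup (Gsub l n k mm)

lemma SDm_le_PBelow : SDm l n k mm ≤ PBelow l (l * l * n + 1) := by
  intro p hp μ hμ
  rw [SDm, mem_weightedHomogeneousSubmodule] at hp
  have hw := hp (MvPolynomial.mem_support_iff.mp hμ)
  have h1 : (weight (triWeight l) μ).1 = n := by rw [hw]
  have hfst : (weight (triWeight l) μ).1 = ∑ v ∈ μ.support, μ v := by
    rw [weight_apply, Finsupp.sum, Prod.fst_sum]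
    refine Finset.sum_congr rfl fun v _ => ?_
    simp [triWeight]
  have hrho : weight (rhoW l) μ = ∑ v ∈ μ.support, μ v * (v.1 * v.1) := by
    rw [weight_apply, Finsupp.sum]
    refine Finset.sum_congr rfl fun v _ => ?_
    simp [rhoW, mul_comm]
  have hle : weight (rhoW l) μ ≤ l * l * n := by
    rw [hrho]
    calc ∑ v ∈ μ.support, μ v * (v.1 * v.1) ≤ ∑ v ∈ μ.support, μ v * (l * l) := by
          refine Finset.sum_le_sum fun v _ => Nat.mul_le_mul_left _ ?_
          exact Nat.mul_le_mul (Fin.is_le _) (Fin.is_le _)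
      _ = (∑ v ∈ μ.support, μ v) * (l * l) := by rw [← Finset.sum_mul]
      _ = l * l * n := by rw [hfst] at h1; rw [h1, mul_comm]
  omega

lemma quad_lt {s u r : ℕ} (h1 : s + 1 ≤ u) (h2 : u ≤ r - 1) (h3 : s + 2 ≤ r) :
    u * u + (r + s - u) * (r + s - u) < s * s + r * r := by
  obtain ⟨a, rfl⟩ : ∃ a, u = s + a + 1 := ⟨u - s - 1, by omega⟩
  obtain ⟨b, rfl⟩ : ∃ b, r = s + a + 1 + (b + 1) := ⟨r - s - a - 2, by omega⟩
  have e : s + a + 1 + (b + 1) + s - (s + a + 1) = s + b + 1 := by omega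
  rw [e]
  nlinarith

lemma gen_step (s r w mq : ℕ) (hs : s ≤ l) (hr : r ≤ l) (h2 : s + 2 ≤ r)
    (hw2 : w + s + 2 ≤ r) (f : ArcRing l) :
    weightedHomogeneousComponent (triWeight l) (n, k, mm)
      (f * PowerSeries.coeff mq (Q'series l s r w hs hr))
      ∈ NF l n k mm (l * l * n) := by
  set g' : ArcRing l := PowerSeries.coeff mq (Q'series l s r w hs hr) with hg'
  set g : ArcRing l := PowerSeries.coeff mq (Qseries l s r w hr) with hg
  set Rres : ArcRing l := ∑ u ∈ Finset.Icc (s+1) (r-1),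
      if h : s ≤ u ∧ u < r then
        ((-1 : ℂ) ^ u * ((r - s - 1).choose (u - s) : ℂ)) •
          PT l ⟨u, by omega⟩ ⟨r + s - u, by omega⟩ w mq
      else 0 with hRdef
  have hgdec : g = ((-1 : ℂ) ^ s) • g' + Rres := by
    rw [hg, coeff_Q l s r w mq hr h2, hg', coeff_Q']
  set W₀ : ℕ := s * s + r * r with hW₀
  have hg'rho : IsWeightedHomogeneous (rhoW l) g' W₀ := by
    rw [hg', coeff_Q']
    exact PT_rho l _ _ w mq
  have hRres : Rres ∈ PBelow l W₀ := by
    refine Submodule.sum_mem _ fun u hu => ?_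
    rw [Finset.mem_Icc] at hu
    rw [dif_pos (by omega : s ≤ u ∧ u < r)]
    refine Submodule.smul_mem _ _ (isWH_mem_PBelow (PT_rho l _ _ w mq) ?_)
    exact quad_lt hu.1 hu.2 h2
  set D : ℕ × ℕ × ℤ := ((2 : ℕ), mq + w, 2 * (s : ℤ) + 2 * (r : ℤ) - 2 * (l : ℤ)) with hD
  have hg'tri : IsWeightedHomogeneous (triWeight l) g' D := by
    rw [hg', coeff_Q']
    exact PT_tri l _ _ w mq
  have hgtri : IsWeightedHomogeneous (triWeight l) g D := by
    rw [← mem_weightedHomogeneousSubmodule, hgdec]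
    refine Submodule.add_mem _ (Submodule.smul_mem _ _ ?_) ?_
    · rw [mem_weightedHomogeneousSubmodule]; exact hg'tri
    · refine Submodule.sum_mem _ fun u hu => ?_
      rw [Finset.mem_Icc] at hu
      rw [dif_pos (by omega : s ≤ u ∧ u < r)]
      refine Submodule.smul_mem _ _ ?_
      rw [mem_weightedHomogeneousSubmodule]
      have h := PT_tri l (⟨u, by omega⟩ : Fin (l+1)) (⟨r + s - u, by omega⟩ : Fin (l+1)) w mq
      have e : ((2 : ℕ), (mq + w : ℕ), 2 * (((⟨u, by omega⟩ : Fin (l+1)) : ℕ) : ℤ)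
          + 2 * (((⟨r + s - u, by omega⟩ : Fin (l+1)) : ℕ) : ℤ) - 2 * (l : ℤ)) = D := by
        rw [hD]
        simp only [Prod.mk.injEq]
        refine ⟨trivial, trivial, ?_⟩
        have : ((r + s - u : ℕ) : ℤ) = (r : ℤ) + s - u := by omega
        rw [this]; push_cast; ring
      rwa [e] at h
  -- decompose f into monomials
  have hfg : f * g' = ∑ μ ∈ f.support, monomial μ (MvPolynomial.coeff μ f) * g' := by
    rw [← Finset.sum_mul, ← MvPolynomial.as_sum]
  rw [hfg, map_sum]
  refine Submodule.sum_mem _ fun μ hμ => ?_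
  set c : ℂ := MvPolynomial.coeff μ f with hc
  have htri_mon : IsWeightedHomogeneous (triWeight l) (monomial μ c * g')
      (weight (triWeight l) μ + D) :=
    (isWeightedHomogeneous_monomial (triWeight l) μ c rfl).mul hg'tri
  by_cases he : weight (triWeight l) μ + D = (n, k, mm)
  · rw [← he, htri_mon.weightedHomogeneousComponent_same]
    set W : ℕ := weight (rhoW l) μ + W₀ with hW
    have hkey : weightedHomogeneousComponent (rhoW l) W (monomial μ c * g)
        = ((-1 : ℂ) ^ s) • (monomial μ c * g') := by
      rw [hgdec, mul_add, mul_smul_comm, map_add, map_smul]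
      rw [((isWeightedHomogeneous_monomial (rhoW l) μ c rfl).mul hg'rho).weightedHomogeneousComponent_same]
      rw [component_PBelow (monomial_mul_PBelow μ c hRres) (le_refl W), add_zero]
    have hmemI : monomial μ c * g ∈ Submodule.restrictScalars ℂ (QIdeal l) := by
      refine Ideal.mul_mem_left _ _ (Ideal.subset_span ?_)
      exact ⟨s, r, w, mq, hr, h2, hw2, rfl⟩
    have hmemSD : monomial μ c * g ∈ SDm l n k mm := by
      rw [SDm, mem_weightedHomogeneousSubmodule]
      exact he ▸ ((isWeightedHomogeneous_monomial (triWeight l) μ c rfl).mul hgtri)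
    have hgPB : g ∈ PBelow l (W₀ + 1) := by
      rw [hgdec]
      exact Submodule.add_mem _
        (Submodule.smul_mem _ _ (isWH_mem_PBelow hg'rho (Nat.lt_succ_self _)))
        (PBelow_mono (Nat.le_succ _) hRres)
    have hmemPB : monomial μ c * g ∈ PBelow l (W + 1) :=
      monomial_mul_PBelow μ c hgPB
    have hmemF : monomial μ c * g ∈ Fsub l n k mm W := ⟨⟨hmemI, hmemSD⟩, hmemPB⟩
    have hsign : monomial μ c * g' = ((-1 : ℂ) ^ s) •
        weightedHomogeneousComponent (rhoW l) W (monomial μ c * g) := by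
      rw [hkey, smul_smul, ← pow_add, Even.neg_one_pow ⟨s, rfl⟩, one_smul]
    by_cases hWle : W ≤ l * l * n
    · have hG : weightedHomogeneousComponent (rhoW l) W (monomial μ c * g)
          ∈ Gsub l n k mm W := Submodule.mem_map_of_mem hmemF
      have hle : Gsub l n k mm W ≤ NF l n k mm (l * l * n) :=
        Finset.le_sup (Finset.mem_range.mpr (by omega))
      rw [hsign]
      exact Submodule.smul_mem _ _ (hle hG)
    · have h0 : weightedHomogeneousComponent (rhoW l) W (monomial μ c * g) = 0 := by
        refine component_PBelow (SDm_le_PBelow l n k mm hmemSD) (by omega)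
      rw [hsign, h0, smul_zero]
      exact Submodule.zero_mem _
  · rw [htri_mon.weightedHomogeneousComponent_ne _ (fun h => he h.symm)]
    exact Submodule.zero_mem _


lemma SDm_fd : FiniteDimensional ℂ (SDm l n k mm) := by
  classical
  set T : Set ((Fin (l+1) × ℕ) →₀ ℕ) :=
    {μ | weight (triWeight l) μ = ((n : ℕ), (k : ℕ), mm)} with hT
  set g₀ : (Fin (l+1) × ℕ) →₀ ℕ :=
    ∑ v ∈ (Finset.univ ×ˢ Finset.range (k+1)), Finsupp.single v n with hg₀
  have hg₀v : ∀ v : Fin (l+1) × ℕ, v.2 ≤ k → g₀ v = n := by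
    intro v hv
    rw [hg₀, Finsupp.finset_sum_apply]
    rw [Finset.sum_congr rfl (fun w _ => Finsupp.single_apply (a := w) (b := n) (a' := v))]
    rw [Finset.sum_ite_eq' _ v (fun _ => n)]
    rw [if_pos (by simp [Finset.mem_product, Finset.mem_range]; omega)]
  have hTsub : T ⊆ Set.Iic g₀ := by
    intro μ hμ
    rw [Set.mem_Iic, Finsupp.le_iff]
    intro v hv
    have h1 : (weight (triWeight l) μ).1 = ∑ x ∈ μ.support, μ x := by
      rw [weight_apply, Finsupp.sum, Prod.fst_sum]
      exact Finset.sum_congr rfl fun x _ => by simp [triWeight]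
    have h2 : (weight (triWeight l) μ).2.1 = ∑ x ∈ μ.support, μ x * x.2 := by
      rw [weight_apply, Finsupp.sum, Prod.snd_sum, Prod.fst_sum]
      exact Finset.sum_congr rfl fun x _ => by simp [triWeight, mul_comm]
    rw [hμ] at h1 h2
    simp only at h1 h2
    have hμv : 0 < μ v := Nat.pos_of_ne_zero (Finsupp.mem_support_iff.mp hv)
    have hvn : μ v ≤ n := by
      rw [h1]
      exact Finset.single_le_sum (fun _ _ => Nat.zero_le _) hv
    have hv2 : v.2 ≤ k := by
      have hk : μ v * v.2 ≤ k := by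
        rw [h2]
        exact Finset.single_le_sum (f := fun x => μ x * x.2) (fun _ _ => Nat.zero_le _) hv
      calc v.2 = 1 * v.2 := (one_mul _).symm
        _ ≤ μ v * v.2 := Nat.mul_le_mul_right _ hμv
        _ ≤ k := hk
    rw [hg₀v v hv2]
    exact hvn
  have hTfin : T.Finite := (Set.finite_Iic g₀).subset hTsub
  have hspan : SDm l n k mm ≤
      Submodule.span ℂ ((fun μ => (monomial μ (1:ℂ) : ArcRing l)) '' T) := by
    intro p hp
    rw [SDm, mem_weightedHomogeneousSubmodule] at hp
    nth_rewrite 1 [MvPolynomial.as_sum p]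
    refine Submodule.sum_mem _ fun μ hμ => ?_
    have : (monomial μ) (MvPolynomial.coeff μ p)
        = (MvPolynomial.coeff μ p) • (monomial μ (1:ℂ)) := by
      rw [MvPolynomial.smul_monomial, smul_eq_mul, mul_one]
    rw [this]
    refine Submodule.smul_mem _ _ (Submodule.subset_span ?_)
    exact ⟨μ, hp (MvPolynomial.mem_support_iff.mp hμ), rfl⟩
  haveI := FiniteDimensional.span_of_finite ℂ (hTfin.image (fun μ => (monomial μ (1:ℂ) : ArcRing l)))
  exact Submodule.finiteDimensional_of_le hspan

lemma inQ' (p : ArcRing l) (hp : p ∈ Q'Ideal l) (f : ArcRing l) :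
    weightedHomogeneousComponent (triWeight l) (n, k, mm) (f * p)
      ∈ NF l n k mm (l * l * n) := by
  revert f
  refine Submodule.span_induction
    (p := fun x _ => ∀ f : ArcRing l, weightedHomogeneousComponent (triWeight l) (n, k, mm) (f * x)
      ∈ NF l n k mm (l * l * n)) ?_ ?_ ?_ ?_ (show p ∈ Submodule.span (ArcRing l) _ from hp)
  · rintro x ⟨s, r, w, mq, hs, hr, h2, hw2, rfl⟩ f
    exact gen_step l n k mm s r w mq hs hr h2 hw2 f
  · intro f
    rw [mul_zero, map_zero]
    exact Submodule.zero_mem _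
  · intro x y _ _ ihx ihy f
    rw [mul_add, map_add]
    exact Submodule.add_mem _ (ihx f) (ihy f)
  · intro a x _ ih f
    rw [smul_eq_mul, ← mul_assoc]
    exact ih (f * a)

lemma Fsub_le_SDm (ω : ℕ) : Fsub l n k mm ω ≤ SDm l n k mm :=
  le_trans inf_le_left inf_le_right

lemma Gsub_le_SDm (ω : ℕ) : Gsub l n k mm ω ≤ SDm l n k mm := by
  rintro x ⟨y, hy, rfl⟩
  have hySD : y ∈ SDm l n k mm := Fsub_le_SDm l n k mm ω hy
  rw [SDm, mem_weightedHomogeneousSubmodule] at hySD ⊢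
  intro dd hdd
  apply hySD
  rw [coeff_weightedHomogeneousComponent] at hdd
  by_cases hc : weight (rhoW l) dd = ω
  · rwa [if_pos hc] at hdd
  · rw [if_neg hc] at hdd; exact absurd rfl hdd

lemma NF_le_SDm (t : ℕ) : NF l n k mm t ≤ SDm l n k mm :=
  Finset.sup_le fun ω _ => Gsub_le_SDm l n k mm ω

lemma finrank_NF_le (t : ℕ) :
    Module.finrank ℂ (NF l n k mm t) ≤ Module.finrank ℂ (Fsub l n k mm t) := by
  haveI := SDm_fd l n k mm
  haveI : ∀ ω, FiniteDimensional ℂ (Fsub l n k mm ω) :=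
    fun ω => Submodule.finiteDimensional_of_le (Fsub_le_SDm l n k mm ω)
  haveI : ∀ ω, FiniteDimensional ℂ (Gsub l n k mm ω) :=
    fun ω => Submodule.finiteDimensional_of_le (Gsub_le_SDm l n k mm ω)
  haveI : ∀ t, FiniteDimensional ℂ (NF l n k mm t) :=
    fun t => Submodule.finiteDimensional_of_le (NF_le_SDm l n k mm t)
  induction t with
  | zero =>
    have h0 : NF l n k mm 0 = Gsub l n k mm 0 := by
      rw [NF, Finset.range_one, Finset.sup_singleton]
    rw [h0, Gsub]
    exact Submodule.finrank_map_le _ _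
  | succ t ih =>
    have hNFsucc : NF l n k mm (t+1) = Gsub l n k mm (t+1) ⊔ NF l n k mm t := by
      rw [NF, NF, Finset.range_add_one, Finset.sup_insert]
    set L := (weightedHomogeneousComponent (rhoW l) (t+1)).comp
      (Fsub l n k mm (t+1)).subtype with hL
    have hrange : LinearMap.range L = Gsub l n k mm (t+1) := by
      rw [hL, LinearMap.range_comp, Submodule.range_subtype]; rfl
    have hle : Fsub l n k mm t ≤ Fsub l n k mm (t+1) :=
      inf_le_inf le_rfl (PBelow_mono (by omega))
    have hker : Submodule.comap (Fsub l n k mm (t+1)).subtype (Fsub l n k mm t)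
        ≤ LinearMap.ker L := by
      intro x hx
      have hxPB : (x : ArcRing l) ∈ PBelow l (t+1) := hx.2
      rw [LinearMap.mem_ker, hL, LinearMap.comp_apply, Submodule.subtype_apply]
      exact component_PBelow hxPB (le_refl (t+1))
    have e1 : Module.finrank ℂ (Gsub l n k mm (t+1)) + Module.finrank ℂ (LinearMap.ker L)
        = Module.finrank ℂ (Fsub l n k mm (t+1)) := by
      rw [← hrange]
      exact LinearMap.finrank_range_add_finrank_ker L
    have efr : Module.finrank ℂ (Submodule.comap (Fsub l n k mm (t+1)).subtype
        (Fsub l n k mm t)) = Module.finrank ℂ (Fsub l n k mm t) :=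
      (Submodule.comapSubtypeEquivOfLe hle).finrank_eq
    have e2 : Module.finrank ℂ (Fsub l n k mm t) ≤ Module.finrank ℂ (LinearMap.ker L) := by
      rw [← efr]
      exact Submodule.finrank_mono hker
    have e3 : Module.finrank ℂ (NF l n k mm (t+1)) ≤
        Module.finrank ℂ (Gsub l n k mm (t+1)) + Module.finrank ℂ (NF l n k mm t) := by
      rw [hNFsucc]
      have h4 := Submodule.finrank_sup_add_finrank_inf_eq (Gsub l n k mm (t+1)) (NF l n k mm t)
      omega
    omega

lemma key_rank :
    Module.finrank ℂ (Submodule.restrictScalars ℂ (Q'Ideal l) ⊓ SDm l n k mm :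
        Submodule ℂ (ArcRing l))
      ≤ Module.finrank ℂ (Submodule.restrictScalars ℂ (QIdeal l) ⊓ SDm l n k mm :
        Submodule ℂ (ArcRing l)) := by
  haveI := SDm_fd l n k mm
  haveI : FiniteDimensional ℂ (NF l n k mm (l*l*n)) :=
    Submodule.finiteDimensional_of_le (NF_le_SDm l n k mm _)
  haveI : FiniteDimensional ℂ
      (Submodule.restrictScalars ℂ (QIdeal l) ⊓ SDm l n k mm : Submodule ℂ (ArcRing l)) :=
    Submodule.finiteDimensional_of_le inf_le_right
  have h1 : Submodule.restrictScalars ℂ (Q'Ideal l) ⊓ SDm l n k mm ≤ NF l n k mm (l*l*n) := by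
    rintro p ⟨hp1, hp2⟩
    have h := inQ' l n k mm p hp1 1
    rw [one_mul] at h
    have hp2' : IsWeightedHomogeneous (triWeight l) p (n, k, mm) := hp2
    rwa [hp2'.weightedHomogeneousComponent_same] at h
  calc Module.finrank ℂ (Submodule.restrictScalars ℂ (Q'Ideal l) ⊓ SDm l n k mm :
        Submodule ℂ (ArcRing l))
      ≤ Module.finrank ℂ (NF l n k mm (l*l*n)) := Submodule.finrank_mono h1
    _ ≤ Module.finrank ℂ (Fsub l n k mm (l*l*n)) := finrank_NF_le l n k mm _
    _ ≤ Module.finrank ℂ (Submodule.restrictScalars ℂ (QIdeal l) ⊓ SDm l n k mm :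
        Submodule ℂ (ArcRing l)) := Submodule.finrank_mono inf_le_left

lemma rank_formula (K : Ideal (ArcRing l)) :
    Module.finrank ℂ (triPiece l K (n, k, mm)) +
      Module.finrank ℂ (Submodule.restrictScalars ℂ K ⊓ SDm l n k mm :
        Submodule ℂ (ArcRing l))
      = Module.finrank ℂ (SDm l n k mm) := by
  haveI := SDm_fd l n k mm
  set L := (Ideal.Quotient.mkₐ ℂ K).toLinearMap.comp (SDm l n k mm).subtype with hL
  have h1 : triPiece l K (n, k, mm) = LinearMap.range L := by
    rw [hL, LinearMap.range_comp, Submodule.range_subtype, triPiece]; rfl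
  have h2 : LinearMap.ker L = Submodule.comap (SDm l n k mm).subtype
      (Submodule.restrictScalars ℂ K ⊓ SDm l n k mm) := by
    ext x
    simp only [hL, LinearMap.mem_ker, LinearMap.comp_apply, Submodule.subtype_apply,
      Submodule.mem_comap, Submodule.mem_inf, Submodule.restrictScalars_mem,
      AlgHom.toLinearMap_apply, Ideal.Quotient.mkₐ_eq_mk]
    rw [Ideal.Quotient.eq_zero_iff_mem]
    exact ⟨fun h => ⟨h, x.2⟩, fun h => h.1⟩
  have efr : Module.finrank ℂ (Submodule.comap (SDm l n k mm).subtype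
      (Submodule.restrictScalars ℂ K ⊓ SDm l n k mm))
      = Module.finrank ℂ (Submodule.restrictScalars ℂ K ⊓ SDm l n k mm :
        Submodule ℂ (ArcRing l)) :=
    (Submodule.comapSubtypeEquivOfLe inf_le_right).finrank_eq
  have h3 := LinearMap.finrank_range_add_finrank_ker L
  rw [← h1, h2, efr] at h3
  exact h3

end Main

end ArcAux


/-- for all `n, k ≥ 0` and `m ∈ ℤ`, the graded component of `S/I'` of
total `x`-degree `n`, `q`-degree `k` and weight `m` has dimension at least that of the
corresponding graded component of `S/I`. -/
theorem dim_quotient_Q'Ideal_ge (l : ℕ) (hl : 1 ≤ l) (n k : ℕ) (m : ℤ) :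
    Module.finrank ℂ (triPiece l (QIdeal l) (n, k, m)) ≤
      Module.finrank ℂ (triPiece l (Q'Ideal l) (n, k, m)) := by
  have hI := ArcAux.rank_formula l n k m (QIdeal l)
  have hI' := ArcAux.rank_formula l n k m (Q'Ideal l)
  have hk := ArcAux.key_rank l n k m
  omega
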